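/- Let H ∈ ℝ^{2^n−1} be any vector (H_α) indexed by nonempty subsets α of {1,...,n} satisfying: H_α ≥ 0, H_α ≤ H_β whenever α ⊆ β, and H_α + H_β ≥ H_{α∪β} + H_{α∩β} (with H_∅ = 0). Then its average Ψ(H) = (h_1,...,h_n), where h_m = C(n,m)^{-1} Σ_{|α|=m} H_α, satisfies h_{m-1} − 2h_m + h_{m+1} ≤ 0 for m = 1,...,n (with h_0 = 0, h_{n+1} = h_n). -/
import Mathlib

open Finset Real
set_option maxHeartbeats 1000000

lemma sum_insert_aux (n k : ℕ) (f : Finset (Fin n) → ℝ) :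
    ∑ D ∈ powersetCard k (univ : Finset (Fin n)), ∑ x ∈ univ \ D, f (insert x D)
      = ((k:ℝ)+1) * ∑ A ∈ powersetCard (k+1) (univ : Finset (Fin n)), f A := by
  have rhs : ((k:ℝ)+1) * ∑ A ∈ powersetCard (k+1) (univ : Finset (Fin n)), f A
      = ∑ A ∈ powersetCard (k+1) (univ : Finset (Fin n)), ∑ _x ∈ A, f A := by
    rw [Finset.mul_sum]
    refine Finset.sum_congr rfl fun A hA => ?_
    rw [Finset.sum_const, (Finset.mem_powersetCard_univ.mp hA : A.card = k+1)]
    push_cast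
    ring
  rw [rhs, Finset.sum_sigma', Finset.sum_sigma']
  refine Finset.sum_nbij' (fun p => ⟨insert p.2 p.1, p.2⟩) (fun q => ⟨q.1.erase q.2, q.2⟩)
    ?_ ?_ ?_ ?_ ?_
  · rintro ⟨D, x⟩ hp
    simp only [Finset.mem_sigma, Finset.mem_powersetCard_univ, Finset.mem_sdiff] at hp ⊢
    exact ⟨by rw [Finset.card_insert_of_notMem hp.2.2, hp.1], Finset.mem_insert_self _ _⟩
  · rintro ⟨A, x⟩ hq
    simp only [Finset.mem_sigma, Finset.mem_powersetCard_univ, Finset.mem_sdiff] at hq ⊢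
    exact ⟨by rw [Finset.card_erase_of_mem hq.2, hq.1]; rfl,
      Finset.mem_univ _, Finset.notMem_erase _ _⟩
  · rintro ⟨D, x⟩ hp
    simp only [Finset.mem_sigma, Finset.mem_powersetCard_univ, Finset.mem_sdiff] at hp
    simp [Finset.erase_insert hp.2.2]
  · rintro ⟨A, x⟩ hq
    simp only [Finset.mem_sigma, Finset.mem_powersetCard_univ, Finset.mem_sdiff] at hq
    simp [Finset.insert_erase hq.2]
  · rintro ⟨D, x⟩ _
    rfl

lemma key_ineq (n m : ℕ) (H : Finset (Fin n) → ℝ)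
    (hsubmod : ∀ α β, H (α ∪ β) + H (α ∩ β) ≤ H α + H β)
    (hm1 : 1 ≤ m) (hmn : m ≤ n) :
    ((m:ℝ)*((m:ℝ)+1)) * (∑ A ∈ powersetCard (m+1) (univ : Finset (Fin n)), H A)
      + ((((n-m:ℕ):ℝ)+1)*((n-m:ℕ):ℝ)) * (∑ A ∈ powersetCard (m-1) (univ : Finset (Fin n)), H A)
    ≤ 2 * ((m:ℝ)*((n-m:ℕ):ℝ)) * (∑ A ∈ powersetCard m (univ : Finset (Fin n)), H A) := by
  have hcard : ∀ D ∈ powersetCard (m-1) (univ : Finset (Fin n)),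
      ((univ : Finset (Fin n)) \ D).card = n - m + 1 := by
    intro D hD
    rw [Finset.card_sdiff_of_subset (Finset.subset_univ _), Finset.card_univ, Fintype.card_fin,
      Finset.mem_powersetCard_univ.mp hD]
    omega
  have hm1' : ((m-1:ℕ):ℝ) + 1 = (m:ℝ) := by
    rw [Nat.cast_sub hm1]; push_cast; ring
  have hsucc : m - 1 + 1 = m := by omega
  -- pointwise submodularity
  have point : ∀ D ∈ powersetCard (m-1) (univ : Finset (Fin n)),
      ∀ x ∈ (univ : Finset (Fin n)) \ D, ∀ y ∈ ((univ : Finset (Fin n)) \ D).erase x,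
      H (insert y (insert x D)) + H D ≤ H (insert x D) + H (insert y D) := by
    intro D _ x hx y hy
    have hxD : x ∉ D := (Finset.mem_sdiff.mp hx).2
    have hyx : y ≠ x := Finset.ne_of_mem_erase hy
    have hyD : y ∉ D := (Finset.mem_sdiff.mp (Finset.mem_of_mem_erase hy)).2
    have h1 : insert x D ∪ insert y D = insert y (insert x D) := by
      ext a
      simp only [Finset.mem_union, Finset.mem_insert]
      tauto
    have h2 : insert x D ∩ insert y D = D := by
      ext a
      simp only [Finset.mem_inter, Finset.mem_insert]
      constructor
      · rintro ⟨(rfl | ha), (h | hb)⟩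
        · exact absurd h.symm hyx
        · exact hb
        · exact ha
        · exact ha
      · intro ha; exact ⟨Or.inr ha, Or.inr ha⟩
    have := hsubmod (insert x D) (insert y D)
    rwa [h1, h2] at this
  have big := Finset.sum_le_sum (fun D hD => Finset.sum_le_sum (fun x hx =>
    Finset.sum_le_sum (fun y hy => point D hD x hx y hy)))
  simp only [Finset.sum_add_distrib] at big
  -- T1
  have hrange : ∀ (D : Finset (Fin n)) (x : Fin n),
      ((univ : Finset (Fin n)) \ D).erase x = univ \ insert x D := by
    intro D x
    rw [Finset.sdiff_insert]
  have hT1 : ∑ D ∈ powersetCard (m-1) (univ : Finset (Fin n)), ∑ x ∈ univ \ D,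
        ∑ y ∈ ((univ : Finset (Fin n)) \ D).erase x, H (insert y (insert x D))
      = ((m:ℝ)*((m:ℝ)+1)) * ∑ A ∈ powersetCard (m+1) (univ : Finset (Fin n)), H A := by
    have e1 : ∀ D ∈ powersetCard (m-1) (univ : Finset (Fin n)), ∀ x ∈ univ \ D,
        ∑ y ∈ ((univ : Finset (Fin n)) \ D).erase x, H (insert y (insert x D))
          = (fun A => ∑ y ∈ univ \ A, H (insert y A)) (insert x D) := by
      intro D _ x _
      rw [hrange]
    calc ∑ D ∈ powersetCard (m-1) (univ : Finset (Fin n)), ∑ x ∈ univ \ D,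
          ∑ y ∈ ((univ : Finset (Fin n)) \ D).erase x, H (insert y (insert x D))
        = ∑ D ∈ powersetCard (m-1) (univ : Finset (Fin n)), ∑ x ∈ univ \ D,
          (fun A => ∑ y ∈ univ \ A, H (insert y A)) (insert x D) :=
          Finset.sum_congr rfl fun D hD => Finset.sum_congr rfl fun x hx => e1 D hD x hx
      _ = (((m-1:ℕ):ℝ)+1) * ∑ A ∈ powersetCard (m-1+1) (univ : Finset (Fin n)),
          ∑ y ∈ univ \ A, H (insert y A) := sum_insert_aux n (m-1) (fun A => ∑ y ∈ univ \ A, H (insert y A))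
      _ = ((m:ℝ)*((m:ℝ)+1)) * ∑ A ∈ powersetCard (m+1) (univ : Finset (Fin n)), H A := by
          rw [hsucc, sum_insert_aux n m H, hm1']
          ring
  have hT2 : ∑ D ∈ powersetCard (m-1) (univ : Finset (Fin n)), ∑ x ∈ univ \ D,
        ∑ _y ∈ ((univ : Finset (Fin n)) \ D).erase x, H D
      = ((((n-m:ℕ):ℝ)+1)*((n-m:ℕ):ℝ)) * ∑ A ∈ powersetCard (m-1) (univ : Finset (Fin n)), H A := by
    rw [Finset.mul_sum]
    refine Finset.sum_congr rfl fun D hD => ?_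
    have hc := hcard D hD
    calc ∑ x ∈ univ \ D, ∑ _y ∈ ((univ : Finset (Fin n)) \ D).erase x, H D
        = ∑ x ∈ univ \ D, ((n-m:ℕ):ℝ) * H D := by
          refine Finset.sum_congr rfl fun x hx => ?_
          rw [Finset.sum_const, Finset.card_erase_of_mem hx, hc, Nat.add_sub_cancel,
            nsmul_eq_mul]
      _ = ((((n-m:ℕ):ℝ)+1)*((n-m:ℕ):ℝ)) * H D := by
          rw [Finset.sum_const, hc, nsmul_eq_mul]
          push_cast
          ring
  have hT3 : ∑ D ∈ powersetCard (m-1) (univ : Finset (Fin n)), ∑ x ∈ univ \ D,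
        ∑ _y ∈ ((univ : Finset (Fin n)) \ D).erase x, H (insert x D)
      = ((n-m:ℕ):ℝ) * ((m:ℝ) * ∑ A ∈ powersetCard m (univ : Finset (Fin n)), H A) := by
    calc ∑ D ∈ powersetCard (m-1) (univ : Finset (Fin n)), ∑ x ∈ univ \ D,
          ∑ _y ∈ ((univ : Finset (Fin n)) \ D).erase x, H (insert x D)
        = ∑ D ∈ powersetCard (m-1) (univ : Finset (Fin n)), ∑ x ∈ univ \ D,
          ((n-m:ℕ):ℝ) * H (insert x D) := by
          refine Finset.sum_congr rfl fun D hD => Finset.sum_congr rfl fun x hx => ?_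
          rw [Finset.sum_const, Finset.card_erase_of_mem hx, hcard D hD, Nat.add_sub_cancel,
            nsmul_eq_mul]
      _ = ((n-m:ℕ):ℝ) * ∑ D ∈ powersetCard (m-1) (univ : Finset (Fin n)), ∑ x ∈ univ \ D,
          H (insert x D) := by
          rw [Finset.mul_sum]
          exact Finset.sum_congr rfl fun D _ => (Finset.mul_sum _ _ _).symm
      _ = ((n-m:ℕ):ℝ) * ((m:ℝ) * ∑ A ∈ powersetCard m (univ : Finset (Fin n)), H A) := by
          rw [sum_insert_aux n (m-1) H, hsucc, hm1']
  have hT4 : ∑ D ∈ powersetCard (m-1) (univ : Finset (Fin n)), ∑ x ∈ univ \ D,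
        ∑ y ∈ ((univ : Finset (Fin n)) \ D).erase x, H (insert y D)
      = ((n-m:ℕ):ℝ) * ((m:ℝ) * ∑ A ∈ powersetCard m (univ : Finset (Fin n)), H A) := by
    calc ∑ D ∈ powersetCard (m-1) (univ : Finset (Fin n)), ∑ x ∈ univ \ D,
          ∑ y ∈ ((univ : Finset (Fin n)) \ D).erase x, H (insert y D)
        = ∑ D ∈ powersetCard (m-1) (univ : Finset (Fin n)),
            ((n-m:ℕ):ℝ) * ∑ x ∈ univ \ D, H (insert x D) := by
          refine Finset.sum_congr rfl fun D hD => ?_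
          have hc := hcard D hD
          calc ∑ x ∈ univ \ D, ∑ y ∈ ((univ : Finset (Fin n)) \ D).erase x, H (insert y D)
              = ∑ x ∈ univ \ D,
                ((∑ y ∈ univ \ D, H (insert y D)) - H (insert x D)) :=
                Finset.sum_congr rfl fun x hx => Finset.sum_erase_eq_sub hx
            _ = (((n-m+1:ℕ)):ℝ) * (∑ y ∈ univ \ D, H (insert y D))
                - ∑ x ∈ univ \ D, H (insert x D) := by
                rw [Finset.sum_sub_distrib, Finset.sum_const, hc, nsmul_eq_mul]
            _ = ((n-m:ℕ):ℝ) * ∑ x ∈ univ \ D, H (insert x D) := by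
                push_cast
                ring
      _ = ((n-m:ℕ):ℝ) * ∑ D ∈ powersetCard (m-1) (univ : Finset (Fin n)), ∑ x ∈ univ \ D,
          H (insert x D) := (Finset.mul_sum _ _ _).symm
      _ = ((n-m:ℕ):ℝ) * ((m:ℝ) * ∑ A ∈ powersetCard m (univ : Finset (Fin n)), H A) := by
          rw [sum_insert_aux n (m-1) H, hsucc, hm1']
  rw [hT1, hT2, hT3, hT4] at big
  linarith

theorem shannon_average_concave (n : ℕ) (H : Finset (Fin n) → ℝ)
    (hempty : H ∅ = 0)
    (hnonneg : ∀ α, 0 ≤ H α)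
    (hmono : ∀ α β, α ⊆ β → H α ≤ H β)
    (hsubmod : ∀ α β, H (α ∪ β) + H (α ∩ β) ≤ H α + H β)
    (h : ℕ → ℝ)
    (hdef : ∀ m, 1 ≤ m → m ≤ n → h m = ((n.choose m : ℝ))⁻¹ *
      ∑ α ∈ powersetCard m (univ : Finset (Fin n)), H α)
    (h0 : h 0 = 0) (hn1 : h (n + 1) = h n) :
    ∀ m, 1 ≤ m → m ≤ n → h (m - 1) - 2 * h m + h (m + 1) ≤ 0 := by
  intro m hm1 hmn
  have hS0 : ∑ A ∈ powersetCard 0 (univ : Finset (Fin n)), H A = 0 := by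
    simp [hempty]
  have hprev : h (m - 1) = ((n.choose (m-1) : ℝ))⁻¹ *
      ∑ A ∈ powersetCard (m-1) (univ : Finset (Fin n)), H A := by
    rcases Nat.eq_or_lt_of_le hm1 with h1 | h2
    · rw [← h1]
      simp [h0, hS0, hempty]
    · exact hdef (m-1) (by omega) (by omega)
  have hcur := hdef m hm1 hmn
  rcases Nat.eq_or_lt_of_le hmn with rfl | hlt
  · -- m = n : reduces to h (m-1) ≤ h m
    have hchoose : m.choose (m-1) = m := by
      rw [← Nat.choose_symm (by omega : m - 1 ≤ m), (by omega : m - (m-1) = 1),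
        Nat.choose_one_right]
    have hSn : h m = ∑ A ∈ powersetCard m (univ : Finset (Fin m)), H A := by
      rw [hcur, Nat.choose_self]
      simp
    have e := sum_insert_aux m (m-1) H
    have hc1 : ((m-1:ℕ):ℝ) + 1 = (m:ℝ) := by
      rw [Nat.cast_sub hm1]; push_cast; ring
    rw [(by omega : m - 1 + 1 = m), hc1] at e
    have lower : ∑ A ∈ powersetCard (m-1) (univ : Finset (Fin m)), H A
        ≤ (m:ℝ) * ∑ A ∈ powersetCard m (univ : Finset (Fin m)), H A := by
      rw [← e]
      refine Finset.sum_le_sum fun D hD => ?_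
      have hcard : ((univ : Finset (Fin m)) \ D).card = 1 := by
        rw [Finset.card_sdiff_of_subset (Finset.subset_univ _), Finset.card_univ, Fintype.card_fin,
          Finset.mem_powersetCard_univ.mp hD]
        omega
      obtain ⟨x, hx⟩ := Finset.card_eq_one.mp hcard
      rw [hx, Finset.sum_singleton]
      exact hmono _ _ (Finset.subset_insert _ _)
    have hmpos : (0:ℝ) < (m:ℝ) := by exact_mod_cast hm1
    have hle : h (m - 1) ≤ h m := by
      rw [hprev, hchoose, hSn]
      calc ((m:ℝ))⁻¹ * ∑ A ∈ powersetCard (m-1) (univ : Finset (Fin m)), H A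
          ≤ ((m:ℝ))⁻¹ * ((m:ℝ) * ∑ A ∈ powersetCard m (univ : Finset (Fin m)), H A) :=
            mul_le_mul_of_nonneg_left lower (by positivity)
        _ = ∑ A ∈ powersetCard m (univ : Finset (Fin m)), H A := by
            field_simp
    linarith [hn1, hle]
  · -- m < n : the main submodularity averaging argument
    have hnext := hdef (m+1) (by omega) (by omega)
    have key := key_ineq n m H hsubmod hm1 hmn
    set A := ∑ α ∈ powersetCard (m-1) (univ : Finset (Fin n)), H α with hA
    set B := ∑ α ∈ powersetCard m (univ : Finset (Fin n)), H α with hB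
    set C := ∑ α ∈ powersetCard (m+1) (univ : Finset (Fin n)), H α with hC
    set μ := (m:ℝ) with hμ
    set ν := ((n-m:ℕ):ℝ) with hν
    have hμpos : (0:ℝ) < μ := by rw [hμ]; exact_mod_cast hm1
    have hνpos : (0:ℝ) < ν := by
      rw [hν]; exact_mod_cast Nat.sub_pos_of_lt hlt
    set p := (n.choose (m-1) : ℝ) with hp
    set q := (n.choose m : ℝ) with hq
    set r := (n.choose (m+1) : ℝ) with hr
    have hppos : (0:ℝ) < p := by
      rw [hp]; exact_mod_cast Nat.choose_pos (by omega : m - 1 ≤ n)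
    have hqpos : (0:ℝ) < q := by
      rw [hq]; exact_mod_cast Nat.choose_pos hmn
    have hrpos : (0:ℝ) < r := by
      rw [hr]; exact_mod_cast Nat.choose_pos (by omega : m + 1 ≤ n)
    have id1 : r * (μ + 1) = q * ν := by
      rw [hr, hq, hμ, hν]
      exact_mod_cast Nat.choose_succ_right_eq n m
    have id2 : q * μ = p * (ν + 1) := by
      have h2 := Nat.choose_succ_right_eq n (m-1)
      rw [(by omega : m - 1 + 1 = m)] at h2
      have hcast : ((n - (m-1) : ℕ):ℝ) = ν + 1 := by
        rw [hν, (by omega : n - (m-1) = (n - m) + 1)]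
        push_cast; ring
      rw [hq, hμ, hp, ← hcast]
      exact_mod_cast h2
    have hK : (0:ℝ) < q * μ * ν := by positivity
    have hpinv : p⁻¹ = ((ν+1)*ν)/(q*μ*ν) := by
      rw [eq_div_iff hK.ne', inv_mul_eq_div, div_eq_iff hppos.ne']
      linear_combination ν * id2
    have hrinv : r⁻¹ = (μ*(μ+1))/(q*μ*ν) := by
      rw [eq_div_iff hK.ne', inv_mul_eq_div, div_eq_iff hrpos.ne']
      linear_combination (-μ) * id1
    have hqinv : q⁻¹ = (μ*ν)/(q*μ*ν) := by
      rw [eq_div_iff hK.ne', inv_mul_eq_div, div_eq_iff hqpos.ne']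
      ring
    rw [hprev, hcur, hnext, hpinv, hqinv, hrinv]
    have hcomb : ((ν+1)*ν)/(q*μ*ν) * A - 2 * ((μ*ν)/(q*μ*ν) * B) + (μ*(μ+1))/(q*μ*ν) * C
        = (μ*(μ+1)*C + (ν+1)*ν*A - 2*(μ*ν)*B)/(q*μ*ν) := by
      ring
    rw [hcomb]
    apply div_nonpos_of_nonpos_of_nonneg _ hK.le
    linarith [key]
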